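/- For every real c > 0 and all integers p ≥ q ≥ 2 with q ≥ c·log₂ p, every finite indexed family of axis-parallel rectangles in the plane satisfying the (p,q)-property can be pierced by a finite set of at most p − q + 1 + 2p/c points. -/

import Mathlib

/-- The `(p,q)`-property for a finite indexed family of sets. -/
def HasPQ {ι α : Type*} [Fintype ι] (F : ι → Set α) (p q : ℕ) : Prop :=
  p ≤ Fintype.card ι ∧
    ∀ J : Finset ι, J.card = p → ∃ K ⊆ J, K.card = q ∧ (⋂ k ∈ K, F k).Nonempty

/-- `P` pierces the family `F`: every member of `F` contains a point of `P`. -/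
def Pierces {ι α : Type*} (F : ι → Set α) (P : Finset α) : Prop :=
  ∀ i, ∃ x ∈ P, x ∈ F i

/-- An axis-parallel rectangle in the plane: a nonempty product of two closed
bounded intervals, i.e. `Set.Icc a b` in `ℝ × ℝ` with `a ≤ b`. -/
def IsRect (A : Set (ℝ × ℝ)) : Prop :=
  ∃ a b : ℝ × ℝ, a ≤ b ∧ A = Set.Icc a b

namespace RectPQ

open Finset

variable {ι : Type} [Fintype ι]

/-- No `q` members of `K` have a common point. -/
def NoShare (F : ι → Set (ℝ × ℝ)) (q : ℕ) (K : Finset ι) : Prop :=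
  ∀ L ⊆ K, L.card = q → ¬(⋂ k ∈ L, F k).Nonempty

/-- Every subfamily of `G` with no `q` members sharing a point has size at most `m`. -/
def Bnd (F : ι → Set (ℝ × ℝ)) (q : ℕ) (m : ℕ) (G : Finset ι) : Prop :=
  ∀ K ⊆ G, NoShare F q K → K.card ≤ m

def lam : ℕ → ℕ
  | 0 => 0
  | (n+1) => lam ((n+1)/2) + 1
decreasing_by exact Nat.div_lt_self (Nat.succ_pos n) one_lt_two

lemma lam_zero : lam 0 = 0 := by rw [lam]

lemma lam_succ (n : ℕ) : lam (n+1) = lam ((n+1)/2) + 1 := by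
  rw [lam]

lemma lam_le : ∀ n m : ℕ, m < 2^n → lam m ≤ n := by
  intro n
  induction n with
  | zero => intro m hm; interval_cases m; rw [lam_zero]
  | succ n ih =>
    intro m hm
    match m with
    | 0 => rw [lam_zero]; exact Nat.zero_le _
    | (m'+1) =>
      rw [lam_succ]
      have h2 : (m'+1)/2 < 2^n := by
        rw [Nat.div_lt_iff_lt_mul (by norm_num)]
        calc m'+1 < 2^(n+1) := hm
        _ = 2^n * 2 := by ring
      exact Nat.succ_le_succ (ih _ h2)

lemma two_mul_le_pow : ∀ k : ℕ, 2*k ≤ 2^k + 1 := by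
  intro k
  induction k with
  | zero => norm_num
  | succ k ih =>
    have h2 : k = 0 ∨ 2 ≤ 2^k := by
      rcases Nat.eq_zero_or_pos k with rfl | hk
      · exact Or.inl rfl
      · exact Or.inr (by calc 2 = 2^1 := rfl
                           _ ≤ 2^k := Nat.pow_le_pow_right (by norm_num) hk)
    rcases h2 with rfl | h2
    · norm_num
    · have : 2^(k+1) = 2^k + 2^k := by ring
      omega

/-- Greedy piercing of a family of rectangles all crossing the vertical line `x = t`. -/
lemma greedy (F : ι → Set (ℝ × ℝ)) (a b : ι → ℝ × ℝ)
    (hF : ∀ i, F i = Set.Icc (a i) (b i)) (hab : ∀ i, a i ≤ b i) (t : ℝ) (G : Finset ι) :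
    (∀ i ∈ G, (a i).1 ≤ t ∧ t ≤ (b i).1) →
    ∃ (P : Finset (ℝ × ℝ)) (D : Finset ι), D ⊆ G ∧ P.card ≤ D.card ∧
      (∀ i ∈ D, ∀ j ∈ D, i ≠ j → ∀ z, z ∈ F i → z ∈ F j → False) ∧
      (∀ i ∈ G, ∃ x ∈ P, x ∈ F i) := by
  classical
  induction G using Finset.strongInduction with
  | _ G ih =>
  intro hcross
  rcases G.eq_empty_or_nonempty with rfl | hne
  · exact ⟨∅, ∅, Finset.Subset.refl _, le_rfl, by simp, by simp⟩
  · obtain ⟨w, hwG, hwmin⟩ := G.exists_min_image (fun i => (b i).2) hne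
    set G' := G.filter (fun i => (b w).2 < (a i).2) with hG'
    have hsub : G' ⊆ G := filter_subset _ _
    have hwG' : w ∉ G' := by
      simp only [hG', mem_filter, not_and, not_lt]
      intro _
      exact (Prod.le_def.mp (hab w)).2
    have hss : G' ⊂ G := (Finset.ssubset_iff_of_subset hsub).mpr ⟨w, hwG, hwG'⟩
    obtain ⟨P', D', hD'sub, hcard, hdisj, hpi⟩ := ih G' hss (fun i hi => hcross i (hsub hi))
    refine ⟨insert (t, (b w).2) P', insert w D', ?_, ?_, ?_, ?_⟩
    · exact insert_subset hwG (hD'sub.trans hsub)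
    · calc (insert (t, (b w).2) P').card ≤ P'.card + 1 := card_insert_le _ _
      _ ≤ D'.card + 1 := by omega
      _ = (insert w D').card := (card_insert_of_notMem (fun h => hwG' (hD'sub h))).symm
    · intro i hi j hj hij z hzi hzj
      rw [mem_insert] at hi hj
      have key : ∀ i' ∈ D', ∀ z', z' ∈ F w → z' ∈ F i' → False := by
        intro i' hi' z' hzw hzi'
        have h1 : (b w).2 < (a i').2 := (mem_filter.mp (hD'sub hi')).2
        rw [hF w] at hzw; rw [hF i'] at hzi'
        have h2 := (Prod.le_def.mp hzw.2).2
        have h3 := (Prod.le_def.mp hzi'.1).2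
        linarith
      rcases hi with rfl | hi
      · rcases hj with rfl | hj
        · exact hij rfl
        · exact key j hj z hzi hzj
      · rcases hj with rfl | hj
        · exact key i hi z hzj hzi
        · exact hdisj i hi j hj hij z hzi hzj
    · intro i hiG
      by_cases hcase : (b w).2 < (a i).2
      · obtain ⟨x, hxP, hxF⟩ := hpi i (mem_filter.mpr ⟨hiG, hcase⟩)
        exact ⟨x, mem_insert_of_mem hxP, hxF⟩
      · refine ⟨(t, (b w).2), mem_insert_self _ _, ?_⟩
        rw [hF i]
        constructor
        · rw [Prod.le_def]
          exact ⟨(hcross i hiG).1, not_lt.mp hcase⟩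
        · rw [Prod.le_def]
          exact ⟨(hcross i hiG).2, hwmin i hiG⟩


/-- Balanced splitting by a vertical line. -/
lemma split (F : ι → Set (ℝ × ℝ)) (a b : ι → ℝ × ℝ)
    (hF : ∀ i, F i = Set.Icc (a i) (b i)) (hab : ∀ i, a i ≤ b i)
    (q m : ℕ) (G : Finset ι) (hB : Bnd F q m G) :
    ∃ t : ℝ, Bnd F q (m/2) (G.filter fun i => (b i).1 < t) ∧
      Bnd F q (m/2) (G.filter fun i => t < (a i).1) := by
  classical
  rcases G.eq_empty_or_nonempty with rfl | hne
  · refine ⟨0, ?_, ?_⟩ <;>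
    · intro K hK _
      rw [Finset.subset_empty.mp (hK.trans (filter_subset _ _))]
      simp
  · set S := G.image (fun i => (b i).1) with hS
    have hSne : S.Nonempty := hne.image _
    set T := S.filter (fun x => Bnd F q (m/2) (G.filter fun i => (b i).1 < x)) with hT
    have hTne : T.Nonempty := by
      refine ⟨S.min' hSne, mem_filter.mpr ⟨S.min'_mem hSne, ?_⟩⟩
      have hemp : (G.filter fun i => (b i).1 < S.min' hSne) = ∅ := by
        rw [filter_eq_empty_iff]
        intro i hi
        exact not_lt.mpr (S.min'_le _ (mem_image_of_mem _ hi))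
      rw [hemp]
      intro K hK _
      rw [Finset.subset_empty.mp hK]
      simp
    set t := T.max' hTne with ht
    have htT : t ∈ T := T.max'_mem hTne
    refine ⟨t, (mem_filter.mp htT).2, ?_⟩
    intro K hK hNS
    by_contra hcard
    push_neg at hcard
    have hKne : K.Nonempty := card_pos.mp (by omega)
    obtain ⟨k₀, hk₀K, hk₀min⟩ := K.exists_min_image (fun k => (a k).1) hKne
    set x := (a k₀).1 with hx
    have htx : t < x := (mem_filter.mp (hK hk₀K)).2
    have hKG : K ⊆ G := hK.trans (filter_subset _ _)
    by_cases hS' : (S.filter (fun s => x ≤ s)).Nonempty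
    · set x' := (S.filter (fun s => x ≤ s)).min' hS' with hx'
      have hx'mem := (S.filter (fun s => x ≤ s)).min'_mem hS'
      have hx'S : x' ∈ S := (mem_filter.mp hx'mem).1
      have hxx' : x ≤ x' := (mem_filter.mp hx'mem).2
      have hx'T : x' ∉ T := by
        intro h
        exact absurd (T.le_max' x' h) (not_le.mpr (lt_of_lt_of_le htx hxx'))
      have hnB : ¬ Bnd F q (m/2) (G.filter fun i => (b i).1 < x') := by
        intro h
        exact hx'T (mem_filter.mpr ⟨hx'S, h⟩)
      rw [Bnd] at hnB
      push_neg at hnB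
      obtain ⟨W, hWsub, hWNS, hWcard⟩ := hnB
      have hWx : ∀ w ∈ W, (b w).1 < x := by
        intro w hw
        have h1 : (b w).1 < x' := (mem_filter.mp (hWsub hw)).2
        by_contra hle
        push_neg at hle
        have hmem : (b w).1 ∈ S.filter (fun s => x ≤ s) :=
          mem_filter.mpr ⟨mem_image_of_mem _ ((filter_subset _ _) (hWsub hw)), hle⟩
        exact absurd ((S.filter (fun s => x ≤ s)).min'_le _ hmem) (not_le.mpr h1)
      have hWG : W ⊆ G := hWsub.trans (filter_subset _ _)
      have hdisjWK : Disjoint W K := by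
        rw [Finset.disjoint_left]
        intro i hiW hiK
        have h1 := hWx i hiW
        have h2 : x ≤ (a i).1 := hk₀min i hiK
        have h3 := (Prod.le_def.mp (hab i)).1
        linarith
      have hNSU : NoShare F q (W ∪ K) := by
        intro L hL hLcard hLne
        obtain ⟨z, hz⟩ := hLne
        by_cases hLW : L ⊆ W
        · exact hWNS L hLW hLcard ⟨z, hz⟩
        by_cases hLK : L ⊆ K
        · exact hNS L hLK hLcard ⟨z, hz⟩
        obtain ⟨kk, hkkL, hkkW⟩ := Finset.not_subset.mp hLW
        obtain ⟨ww, hwwL, hwwK⟩ := Finset.not_subset.mp hLK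
        have hkkK : kk ∈ K := (mem_union.mp (hL hkkL)).resolve_left hkkW
        have hwwW : ww ∈ W := (mem_union.mp (hL hwwL)).resolve_right hwwK
        have hzk : z ∈ F kk := Set.mem_iInter₂.mp hz kk hkkL
        have hzw : z ∈ F ww := Set.mem_iInter₂.mp hz ww hwwL
        rw [hF kk] at hzk
        rw [hF ww] at hzw
        have h1 : z.1 ≤ (b ww).1 := (Prod.le_def.mp hzw.2).1
        have h2 : (a kk).1 ≤ z.1 := (Prod.le_def.mp hzk.1).1
        have h3 : (b ww).1 < x := hWx ww hwwW
        have h4 : x ≤ (a kk).1 := hk₀min kk hkkK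
        linarith
      have hfin := hB (W ∪ K) (union_subset hWG hKG) hNSU
      rw [card_union_of_disjoint hdisjWK] at hfin
      omega
    · rw [Finset.not_nonempty_iff_eq_empty, filter_eq_empty_iff] at hS'
      have h1 : (b k₀).1 ∈ S := mem_image_of_mem _ (hKG hk₀K)
      have h2 := hS' h1
      push_neg at h2
      have h3 := (Prod.le_def.mp (hab k₀)).1
      rw [hx] at h2
      linarith

/-- Main recursion: piercing with per-depth witness families. -/
lemma main (F : ι → Set (ℝ × ℝ)) (a b : ι → ℝ × ℝ)
    (hF : ∀ i, F i = Set.Icc (a i) (b i)) (hab : ∀ i, a i ≤ b i)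
    (q : ℕ) (hq2 : 2 ≤ q) :
    ∀ m : ℕ, ∀ G : Finset ι, Bnd F q m G →
    ∃ (P : Finset (ℝ × ℝ)) (Ds : ℕ → Finset ι),
      (∀ ℓ, Ds ℓ ⊆ G) ∧ (∀ ℓ, lam m ≤ ℓ → Ds ℓ = ∅) ∧
      (∀ ℓ ℓ', ℓ ≠ ℓ' → Disjoint (Ds ℓ) (Ds ℓ')) ∧
      (∀ ℓ, ∀ i ∈ Ds ℓ, ∀ j ∈ Ds ℓ, i ≠ j → ∀ z, z ∈ F i → z ∈ F j → False) ∧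
      P.card ≤ ∑ ℓ ∈ Finset.range (lam m), (Ds ℓ).card ∧
      (∀ i ∈ G, ∃ x ∈ P, x ∈ F i) := by
  classical
  intro m
  induction m using Nat.strong_induction_on with
  | _ m ihm =>
  intro G hB
  rcases Nat.eq_zero_or_pos m with rfl | hm
  · have hGe : G = ∅ := by
      rw [eq_empty_iff_forall_notMem]
      intro i hi
      have h1 : NoShare F q {i} := by
        intro L hL hLcard _
        have h2 : L.card ≤ 1 := le_trans (card_le_card hL) (by simp)
        omega
      have h3 := hB {i} (Finset.singleton_subset_iff.mpr hi) h1
      simp at h3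
    subst hGe
    exact ⟨∅, fun _ => ∅, by simp, by simp, by simp, by simp, by simp, by simp⟩
  · obtain ⟨t, hBL, hBR⟩ := split F a b hF hab q m G hB
    set Lf := G.filter (fun i => (b i).1 < t) with hLf
    set Rf := G.filter (fun i => t < (a i).1) with hRf
    set M := G.filter (fun i => (a i).1 ≤ t ∧ t ≤ (b i).1) with hM
    obtain ⟨P₀, D₀, hD₀M, hcard₀, hgeom₀, hpi₀⟩ :=
      greedy F a b hF hab t M (fun i hi => (mem_filter.mp hi).2)
    have hhalf : m/2 < m := Nat.div_lt_self hm one_lt_two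
    obtain ⟨PL, DsL, hsubL, hvanL, hdisjL, hgeomL, hcardL, hpiL⟩ := ihm (m/2) hhalf Lf hBL
    obtain ⟨PR, DsR, hsubR, hvanR, hdisjR, hgeomR, hcardR, hpiR⟩ := ihm (m/2) hhalf Rf hBR
    have hlam : lam m = lam (m/2) + 1 := by
      obtain ⟨n, rfl⟩ := Nat.exists_eq_succ_of_ne_zero (Nat.pos_iff_ne_zero.mp hm)
      exact lam_succ n
    -- disjointness of the three parts
    have hLR : Disjoint Lf Rf := by
      rw [Finset.disjoint_left]
      intro i hiL hiR
      have h1 : (b i).1 < t := (mem_filter.mp hiL).2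
      have h2 : t < (a i).1 := (mem_filter.mp hiR).2
      have h3 := (Prod.le_def.mp (hab i)).1
      linarith
    have hLM : Disjoint Lf M := by
      rw [Finset.disjoint_left]
      intro i hiL hiM
      have h1 : (b i).1 < t := (mem_filter.mp hiL).2
      have h2 := (mem_filter.mp hiM).2.2
      linarith
    have hRM : Disjoint Rf M := by
      rw [Finset.disjoint_left]
      intro i hiR hiM
      have h1 : t < (a i).1 := (mem_filter.mp hiR).2
      have h2 := (mem_filter.mp hiM).2.1
      linarith
    -- geometric cross disjointness between Lf and Rf
    have hgeoLR : ∀ i ∈ Lf, ∀ j ∈ Rf, ∀ z : ℝ × ℝ, z ∈ F i → z ∈ F j → False := by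
      intro i hi j hj z hzi hzj
      have h1 : (b i).1 < t := (mem_filter.mp hi).2
      have h2 : t < (a j).1 := (mem_filter.mp hj).2
      rw [hF i] at hzi
      rw [hF j] at hzj
      have h3 : z.1 ≤ (b i).1 := (Prod.le_def.mp hzi.2).1
      have h4 : (a j).1 ≤ z.1 := (Prod.le_def.mp hzj.1).1
      linarith
    refine ⟨P₀ ∪ PL ∪ PR,
      fun ℓ => match ℓ with | 0 => D₀ | (ℓ'+1) => DsL ℓ' ∪ DsR ℓ', ?_, ?_, ?_, ?_, ?_, ?_⟩
    · intro ℓ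
      match ℓ with
      | 0 => exact hD₀M.trans (filter_subset _ _)
      | (ℓ'+1) =>
        exact union_subset ((hsubL ℓ').trans (filter_subset _ _))
          ((hsubR ℓ').trans (filter_subset _ _))
    · intro ℓ hℓ
      match ℓ, hℓ with
      | 0, hℓ => exact absurd hℓ (by omega)
      | (ℓ'+1), hℓ =>
        have h1 : lam (m/2) ≤ ℓ' := by omega
        show DsL ℓ' ∪ DsR ℓ' = ∅
        rw [hvanL ℓ' h1, hvanR ℓ' h1]
        simp
    · intro ℓ ℓ' hne
      match ℓ, ℓ', hne with
      | 0, 0, hne => exact absurd rfl hne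
      | 0, (l'+1), _ =>
        refine Finset.disjoint_union_right.mpr ⟨?_, ?_⟩
        · exact hLM.symm.mono hD₀M (hsubL l')
        · exact hRM.symm.mono hD₀M (hsubR l')
      | (l+1), 0, _ =>
        refine Finset.disjoint_union_left.mpr ⟨?_, ?_⟩
        · exact hLM.mono (hsubL l) hD₀M
        · exact hRM.mono (hsubR l) hD₀M
      | (l+1), (l'+1), hne =>
        have hll' : l ≠ l' := by omega
        refine Finset.disjoint_union_left.mpr ⟨?_, ?_⟩
        · refine Finset.disjoint_union_right.mpr ⟨hdisjL l l' hll', ?_⟩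
          exact hLR.mono (hsubL l) (hsubR l')
        · refine Finset.disjoint_union_right.mpr ⟨?_, hdisjR l l' hll'⟩
          exact hLR.symm.mono (hsubR l) (hsubL l')
    · intro ℓ
      match ℓ with
      | 0 => exact hgeom₀
      | (ℓ'+1) =>
        intro i hi j hj hij z hzi hzj
        rcases mem_union.mp hi with hiL | hiR <;> rcases mem_union.mp hj with hjL | hjR
        · exact hgeomL ℓ' i hiL j hjL hij z hzi hzj
        · exact hgeoLR i (hsubL ℓ' hiL) j (hsubR ℓ' hjR) z hzi hzj
        · exact hgeoLR j (hsubL ℓ' hjL) i (hsubR ℓ' hiR) z hzj hzi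
        · exact hgeomR ℓ' i hiR j hjR hij z hzi hzj
    · have hsum : ∑ ℓ ∈ Finset.range (lam m),
          ((fun ℓ => match ℓ with | 0 => D₀ | (ℓ'+1) => DsL ℓ' ∪ DsR ℓ') ℓ).card
          = D₀.card + (∑ ℓ ∈ Finset.range (lam (m/2)), (DsL ℓ).card)
            + (∑ ℓ ∈ Finset.range (lam (m/2)), (DsR ℓ).card) := by
        rw [hlam, Finset.sum_range_succ']
        have hcu : ∀ ℓ', (DsL ℓ' ∪ DsR ℓ').card = (DsL ℓ').card + (DsR ℓ').card := by
          intro ℓ'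
          exact card_union_of_disjoint (hLR.mono (hsubL ℓ') (hsubR ℓ'))
        simp only [hcu]
        rw [Finset.sum_add_distrib]
        ring
      rw [hsum]
      calc (P₀ ∪ PL ∪ PR).card ≤ (P₀ ∪ PL).card + PR.card := card_union_le _ _
        _ ≤ P₀.card + PL.card + PR.card := by
            have := card_union_le P₀ PL
            omega
        _ ≤ _ := by omega
    · intro i hiG
      by_cases h1 : (a i).1 ≤ t ∧ t ≤ (b i).1
      · obtain ⟨x, hxP, hxF⟩ := hpi₀ i (mem_filter.mpr ⟨hiG, h1⟩)
        exact ⟨x, mem_union_left _ (mem_union_left _ hxP), hxF⟩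
      · by_cases h2 : (b i).1 < t
        · obtain ⟨x, hxP, hxF⟩ := hpiL i (mem_filter.mpr ⟨hiG, h2⟩)
          exact ⟨x, mem_union_left _ (mem_union_right _ hxP), hxF⟩
        · push_neg at h2
          have h3 : t < (a i).1 := by
            by_contra hcon
            push_neg at hcon
            exact h1 ⟨hcon, h2⟩
          obtain ⟨x, hxP, hxF⟩ := hpiR i (mem_filter.mpr ⟨hiG, h3⟩)
          exact ⟨x, mem_union_right _ hxP, hxF⟩

/-- Counting: any `j ≤ q-1` consecutive levels of witnesses total at most `p-q+j`. -/
lemma block (F : ι → Set (ℝ × ℝ)) (p q : ℕ) (hpq : HasPQ F p q) (hq2 : 2 ≤ q) (hqp : q ≤ p)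
    (Ds : ℕ → Finset ι)
    (hdisj : ∀ ℓ ℓ', ℓ ≠ ℓ' → Disjoint (Ds ℓ) (Ds ℓ'))
    (hgeom : ∀ ℓ, ∀ i ∈ Ds ℓ, ∀ j ∈ Ds ℓ, i ≠ j → ∀ z : ℝ × ℝ, z ∈ F i → z ∈ F j → False)
    (s j : ℕ) (hj : j ≤ q - 1) :
    ∑ ℓ ∈ Finset.range j, (Ds (s + ℓ)).card ≤ p - q + j := by
  classical
  by_contra hcon
  push_neg at hcon
  set U := (Finset.range j).biUnion (fun ℓ => Ds (s + ℓ)) with hU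
  have hUcard : U.card = ∑ ℓ ∈ Finset.range j, (Ds (s+ℓ)).card := by
    refine card_biUnion ?_
    intro x _ y _ hxy
    exact hdisj _ _ (by omega)
  have hUc : p - q + j + 1 ≤ U.card := by omega
  obtain ⟨U', hU'U, hU'card⟩ := U.exists_subset_card_eq hUc
  have hcardι : p ≤ (Finset.univ : Finset ι).card := by
    rw [card_univ]; exact hpq.1
  have hpad : q - 1 - j ≤ (Finset.univ \ U').card := by
    rw [card_sdiff_of_subset (subset_univ _)]
    have : U'.card = p - q + j + 1 := hU'card
    omega
  obtain ⟨pads, hpadsub, hpadcard⟩ := (Finset.univ \ U').exists_subset_card_eq hpad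
  have hdisjUp : Disjoint U' pads := by
    rw [Finset.disjoint_right]
    intro i hip hiU'
    exact (mem_sdiff.mp (hpadsub hip)).2 hiU'
  have hJcard : (U' ∪ pads).card = p := by
    rw [card_union_of_disjoint hdisjUp, hU'card, hpadcard]
    omega
  obtain ⟨K, hKJ, hKcard, hKne⟩ := hpq.2 (U' ∪ pads) hJcard
  obtain ⟨z, hz⟩ := hKne
  have h1 : K.card ≤ (K ∩ U').card + (q - 1 - j) := by
    have hKsub : K ⊆ (K ∩ U') ∪ (K ∩ pads) := by
      intro i hi
      rcases mem_union.mp (hKJ hi) with h | h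
      · exact mem_union_left _ (mem_inter.mpr ⟨hi, h⟩)
      · exact mem_union_right _ (mem_inter.mpr ⟨hi, h⟩)
    calc K.card ≤ ((K ∩ U') ∪ (K ∩ pads)).card := card_le_card hKsub
      _ ≤ (K ∩ U').card + (K ∩ pads).card := card_union_le _ _
      _ ≤ (K ∩ U').card + (q-1-j) := by
          have h5 : (K ∩ pads).card ≤ pads.card := card_le_card inter_subset_right
          omega
  have h2 : j + 1 ≤ (K ∩ U').card := by omega
  have hmaps : ∀ i ∈ K ∩ U', ∃ ℓ ∈ Finset.range j, i ∈ Ds (s+ℓ) := by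
    intro i hi
    have : i ∈ U := hU'U ((mem_inter.mp hi).2)
    exact mem_biUnion.mp this
  set f : ι → ℕ := fun i =>
    if h : ∃ ℓ ∈ Finset.range j, i ∈ Ds (s+ℓ) then h.choose else 0 with hfdef
  have hf : ∀ i ∈ K ∩ U', f i ∈ Finset.range j ∧ i ∈ Ds (s + f i) := by
    intro i hi
    have h := hmaps i hi
    simp only [hfdef, dif_pos h]
    exact ⟨h.choose_spec.1, h.choose_spec.2⟩
  have hcard' : (Finset.range j).card < (K ∩ U').card := by
    rw [card_range]; omega
  obtain ⟨i1, hi1, i2, hi2, hne12, hfeq⟩ :=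
    Finset.exists_ne_map_eq_of_card_lt_of_maps_to hcard' (fun i hi => (hf i hi).1)
  have hz1 : z ∈ F i1 := Set.mem_iInter₂.mp hz i1 (mem_inter.mp hi1).1
  have hz2 : z ∈ F i2 := Set.mem_iInter₂.mp hz i2 (mem_inter.mp hi2).1
  have hi2' : i2 ∈ Ds (s + f i1) := by
    rw [hfeq]; exact (hf i2 hi2).2
  exact hgeom (s + f i1) i1 (hf i1 hi1).2 i2 hi2' hne12 z hz1 hz2

/-- Chunked counting over `k` blocks of `q-1` levels. -/
lemma chunks (F : ι → Set (ℝ × ℝ)) (p q : ℕ) (hpq : HasPQ F p q) (hq2 : 2 ≤ q) (hqp : q ≤ p)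
    (Ds : ℕ → Finset ι)
    (hdisj : ∀ ℓ ℓ', ℓ ≠ ℓ' → Disjoint (Ds ℓ) (Ds ℓ'))
    (hgeom : ∀ ℓ, ∀ i ∈ Ds ℓ, ∀ j ∈ Ds ℓ, i ≠ j → ∀ z : ℝ × ℝ, z ∈ F i → z ∈ F j → False) :
    ∀ k, ∑ ℓ ∈ Finset.range (k * (q-1)), (Ds ℓ).card ≤ k * (p-1) := by
  intro k
  induction k with
  | zero => simp
  | succ k ih =>
    have hsplit : (k+1) * (q-1) = k * (q-1) + (q-1) := by ring
    rw [hsplit, Finset.sum_range_add]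
    have hblk := block F p q hpq hq2 hqp Ds hdisj hgeom (k * (q-1)) (q-1) le_rfl
    have : p - q + (q-1) = p - 1 := by omega
    calc ∑ ℓ ∈ Finset.range (k * (q-1)), (Ds ℓ).card
          + ∑ ℓ ∈ Finset.range (q-1), (Ds (k * (q-1) + ℓ)).card
        ≤ k * (p-1) + (p - q + (q-1)) := by
          exact Nat.add_le_add ih hblk
      _ = k * (p-1) + (p-1) := by omega
      _ = (k+1) * (p-1) := by ring

end RectPQ

set_option maxHeartbeats 2000000 in
open RectPQ Finset in
/-- Lemma 2.5 (weak `(p,q)`-theorem for rectangles): for every `c > 0` and all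
`p ≥ q ≥ 2` with `q ≥ c·log₂ p`, any family of axis-parallel rectangles in the
plane with the `(p,q)`-property can be pierced by `p - q + 1 + 2p/c` points. -/
theorem rect_weak_pq {ι : Type} [Fintype ι] (F : ι → Set (ℝ × ℝ))
    (hrect : ∀ i, IsRect (F i))
    (c : ℝ) (hc : 0 < c)
    (p q : ℕ) (hq2 : 2 ≤ q) (hqp : q ≤ p)
    (hlog : c * Real.logb 2 (p : ℝ) ≤ (q : ℝ))
    (hpq : HasPQ F p q) :
    ∃ P : Finset (ℝ × ℝ),
      (P.card : ℝ) ≤ (p : ℝ) - (q : ℝ) + 1 + 2 * (p : ℝ) / c ∧ Pierces F P := by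
  classical
  choose a b hab hFi using hrect
  have hp2 : 2 ≤ p := le_trans hq2 hqp
  have hBuniv : Bnd F q (p-1) Finset.univ := by
    intro K _ hNS
    by_contra h
    push_neg at h
    obtain ⟨J, hJK, hJcard⟩ := K.exists_subset_card_eq (n := p) (by omega)
    obtain ⟨K', hK'J, hK'card, hK'ne⟩ := hpq.2 J hJcard
    exact hNS K' (hK'J.trans hJK) hK'card hK'ne
  obtain ⟨P, Ds, hsub, hvan, hdisj, hgeom, hcard, hpi⟩ :=
    RectPQ.main F a b hFi hab q hq2 (p-1) Finset.univ hBuniv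
  refine ⟨P, ?_, fun i => hpi i (Finset.mem_univ i)⟩
  set N := lam (p-1) with hN
  have hN1 : 1 ≤ N := by
    obtain ⟨n, hn⟩ := Nat.exists_eq_succ_of_ne_zero (show p-1 ≠ 0 by omega)
    rw [hN, hn, lam_succ]
    omega
  have hpow : 2^(N-1) ≤ p-1 := by
    by_contra hcon
    push_neg at hcon
    have := lam_le (N-1) (p-1) hcon
    omega
  -- basic real facts
  have hp0 : (0:ℝ) < p := by exact_mod_cast (by omega : 0 < p)
  have hq0 : (0:ℝ) < q := by exact_mod_cast (by omega : 0 < q)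
  have hp2R : (2:ℝ) ≤ p := by exact_mod_cast hp2
  have hq2R : (2:ℝ) ≤ q := by exact_mod_cast hq2
  have hqR : (q:ℝ) ≤ p := by exact_mod_cast hqp
  set L0 := Real.logb 2 (p:ℝ) with hL0
  have hL0_1 : 1 ≤ L0 := by
    rw [hL0, show (1:ℝ) = Real.logb 2 2 from (Real.logb_self_eq_one (by norm_num)).symm]
    exact Real.logb_le_logb_of_le (by norm_num) (by norm_num) hp2R
  have hL0pos : 0 < L0 := lt_of_lt_of_le one_pos hL0_1
  have hNL0 : ((N:ℝ) - 1) ≤ L0 := by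
    have h0 : (2:ℕ)^(N-1) ≤ p := le_trans hpow (by omega)
    have h1 : ((2:ℝ))^(((N-1:ℕ)):ℝ) ≤ (p:ℝ) := by
      rw [Real.rpow_natCast]
      exact_mod_cast h0
    have h2 : Real.logb 2 ((2:ℝ)^(((N-1:ℕ)):ℝ)) ≤ L0 :=
      Real.logb_le_logb_of_le (by norm_num) (by positivity) h1
    rw [Real.logb_rpow (by norm_num) (by norm_num)] at h2
    have h3 : ((N-1:ℕ):ℝ) = (N:ℝ) - 1 := by
      push_cast [Nat.cast_sub hN1]
      ring
    linarith [h2, h3.symm.le, h3.le]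
  have hbudget : 2*(p:ℝ)*L0/q ≤ 2*(p:ℝ)/c := by
    rw [div_le_div_iff₀ hq0 hc]
    have h := mul_le_mul_of_nonneg_left hlog (le_of_lt (by positivity : (0:ℝ) < 2*(p:ℝ)))
    nlinarith [h]
  by_cases hcase : N ≤ q - 1
  · -- few levels
    have hA : P.card ≤ p - q + N := by
      refine le_trans hcard ?_
      have hb := RectPQ.block F p q hpq hq2 hqp Ds hdisj hgeom 0 N hcase
      simpa using hb
    have hcast : (P.card:ℝ) ≤ (p:ℝ) - q + N := by
      have h1 := (Nat.cast_le (α := ℝ)).mpr hA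
      push_cast [Nat.cast_sub hqp] at h1
      linarith
    have hN2 : (N:ℝ) - 1 ≤ 2*(p:ℝ)/c := by
      have h1 : L0 ≤ 2*(p:ℝ)*L0/q := by
        rw [le_div_iff₀ hq0]
        nlinarith [hL0pos.le, hqR, hp0.le]
      linarith [hNL0, h1, hbudget]
    linarith [hcast, hN2]
  · -- many levels: chunking
    push_neg at hcase
    have hqN : q ≤ N := by omega
    set Kk := (N-1)/(q-1) with hKk
    have hs0 : 0 < q - 1 := by omega
    have hNle : N ≤ (Kk+1)*(q-1) := by
      have hdm := Nat.div_add_mod (N-1) (q-1)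
      have hmlt : (N-1) % (q-1) < q-1 := Nat.mod_lt _ hs0
      have h1 : N - 1 < (Kk+1) * (q-1) := by
        calc N - 1 = (q-1) * Kk + (N-1) % (q-1) := by rw [hKk]; omega
          _ < (q-1) * Kk + (q-1) := by omega
          _ = (Kk+1) * (q-1) := by ring
      have h2 : N - 1 + 1 ≤ (Kk+1)*(q-1) := h1
      have h3 : N = N - 1 + 1 := by omega
      rw [h3]
      exact h2
    have hsumle : ∑ ℓ ∈ Finset.range N, (Ds ℓ).card ≤ (Kk+1)*(p-1) := by
      have hmono : ∑ ℓ ∈ Finset.range N, (Ds ℓ).card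
          ≤ ∑ ℓ ∈ Finset.range ((Kk+1)*(q-1)), (Ds ℓ).card :=
        Finset.sum_le_sum_of_subset (Finset.range_subset_range.mpr hNle)
      exact le_trans hmono (RectPQ.chunks F p q hpq hq2 hqp Ds hdisj hgeom (Kk+1))
    have hBnat : P.card ≤ (Kk+1)*(p-1) := le_trans hcard hsumle
    have hcastB : (P.card:ℝ) ≤ ((Kk:ℝ)+1)*((p:ℝ)-1) := by
      have h1 := (Nat.cast_le (α := ℝ)).mpr hBnat
      push_cast [Nat.cast_sub (show 1 ≤ p by omega)] at h1
      linarith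
    have hKr : (Kk:ℝ) * ((q:ℝ)-1) ≤ (N:ℝ) - 1 := by
      have h5 : Kk * (q-1) ≤ N-1 := Nat.div_mul_le_self _ _
      have h6 := (Nat.cast_le (α := ℝ)).mpr h5
      push_cast [Nat.cast_sub (show 1 ≤ q by omega), Nat.cast_sub hN1] at h6
      linarith
    have hqNr : (q:ℝ) ≤ (N:ℝ) := by exact_mod_cast hqN
    have hp2n : 2*((N:ℝ)-1) ≤ (p:ℝ) := by
      have htm := RectPQ.two_mul_le_pow (N-1)
      have h6 : 2*(N-1) ≤ p := by
        set E := 2^(N-1) with hE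
        omega
      have h7 := (Nat.cast_le (α := ℝ)).mpr h6
      push_cast [Nat.cast_sub hN1] at h7
      linarith
    -- real abbreviations
    set n : ℝ := (N:ℝ) - 1 with hn
    set Q : ℝ := (q:ℝ) with hQ
    set Pr : ℝ := (p:ℝ) with hPr
    set k : ℝ := (Kk:ℝ) with hk
    set B : ℝ := 2*Pr*n/Q with hB
    have hn1 : (1:ℝ) ≤ n := by rw [hn]; linarith [hqNr, hq2R]
    have hk0 : (0:ℝ) ≤ k := Nat.cast_nonneg _
    have hQQ : (0:ℝ) < Q*(Q-1) := by nlinarith [hq2R]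
    have heB : B*Q = 2*Pr*n := by
      rw [hB]
      field_simp
    have hnQ : (0:ℝ) ≤ n + 1 - Q := by linarith [hqNr]
    have hnQ1 : (0:ℝ) ≤ n - (Q - 1) := by linarith [hqNr]
    have hQ2 : (0:ℝ) ≤ Q - 2 := by linarith [hq2R]
    have hPn : (0:ℝ) ≤ Pr - (n+1) := by linarith [hp2n, hn1]
    have i1 : Q*(Pr-1)*(k*(Q-1)) ≤ Q*(Pr-1)*n :=
      mul_le_mul_of_nonneg_left hKr (mul_nonneg hq0.le (by linarith : (0:ℝ) ≤ Pr - 1))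
    have i2a : Q*(Q-1) ≤ n*(n+1) := by nlinarith [hnQ1, hnQ, hq0.le, hn1]
    have i2 : (Q*(Q-1))*(Q-2) ≤ (n*(n+1))*(Q-2) := mul_le_mul_of_nonneg_right i2a hQ2
    have i3a : n*(n+1) ≤ n*Pr := by nlinarith [hPn, hn1]
    have i3 : (n*(n+1))*(Q-2) ≤ (n*Pr)*(Q-2) := mul_le_mul_of_nonneg_right i3a hQ2
    have hmain : ((k+1)*(Pr-1))*(Q*(Q-1)) ≤ (Pr-Q+1+B)*(Q*(Q-1)) := by
      nlinarith [i1, i2, i3, heB, mul_nonneg (by linarith [hn1] : (0:ℝ) ≤ n) hq0.le]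
    have hkey : (k+1)*(Pr-1) ≤ Pr-Q+1+B := (mul_le_mul_iff_of_pos_right hQQ).mp hmain
    have hBle : B ≤ 2*Pr/c := by
      have h7 : B ≤ 2*Pr*L0/Q := by
        rw [hB]
        refine div_le_div_of_nonneg_right ?_ hq0.le
        nlinarith [hNL0, hp0.le]
      calc B ≤ 2*Pr*L0/Q := h7
        _ ≤ 2*Pr/c := hbudget
    calc (P.card:ℝ) ≤ (k+1)*(Pr-1) := hcastB
      _ ≤ Pr-Q+1+B := hkey
      _ ≤ Pr-Q+1+2*Pr/c := by linarith [hBle]
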